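/- There is an explicit bijection \Phi between the set M_k of k-tuples (m_1,\ldots,m_k) of non-negative integers with \sum m_i = k and \sum_{i \le h} m_i \ge h for h < k, and the set Y_k of planar binary trees with k internal vertices, defined recursively by: \Phi((1)) = Y (the tree with one internal vertex); \Phi(m) = \Phi(m') \backslash \Phi(m'') if m concatenates as m' \in M_l followed by m'' \in M_{k-l}; and \Phi((m_1,\ldots,m_{k-1},0)) = \Phi((m_1-1,m_2,\ldots,m_{k-1})) / Y if m is indecomposable (in which case necessarily m_1 > 1 and m_k = 0). -/

import Mathlib

/-- Rooted planar binary trees: a tree is either a leaf or an internal node with a left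
and a right subtree (`node l r = l ∨ r`). -/
inductive PBT : Type
  | leaf : PBT
  | node : PBT → PBT → PBT
deriving DecidableEq

/-- The number of internal vertices of a planar binary tree. -/
def PBT.size : PBT → ℕ
  | .leaf => 0
  | .node l r => l.size + r.size + 1

/-- `over t s = t / s`: grafting of the root of `t` on the left-most leaf of `s`. -/
def treeOver : PBT → PBT → PBT
  | t, .leaf => t
  | t, .node l r => .node (treeOver t l) r

/-- `under t s = t \ s`: grafting of the root of `s` on the right-most leaf of `t`. -/
def under : PBT → PBT → PBT
  | .leaf, s => s
  | .node l r, s => .node l (under r s)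

/-- Membership in `M_k` (for `k = m.length ≥ 1`): a tuple of non-negative integers
`(m_1, …, m_k)` with `m_1 + ⋯ + m_k = k` and `m_1 + ⋯ + m_h ≥ h` for `h = 1, …, k-1`. -/
def inM (m : List ℕ) : Prop :=
  m ≠ [] ∧ m.sum = m.length ∧ ∀ h < m.length, h ≤ (m.take h).sum

/-- A tuple in some `M_k` is decomposable if it is the concatenation of a tuple in `M_l`
and a tuple in `M_{k-l}` for some `0 < l < k`. -/
def decomposable (m : List ℕ) : Prop :=
  ∃ u v : List ℕ, inM u ∧ inM v ∧ m = u ++ v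

section Dev

def inc : List ℕ → List ℕ
  | [] => []
  | a :: t => (a + 1) :: t

def Psi : PBT → List ℕ
  | .leaf => []
  | .node .leaf r => 1 :: Psi r
  | .node (.node a b) r => (inc (Psi (.node a b)) ++ [0]) ++ Psi r

def bse : PBT → List ℕ
  | .leaf => [1]
  | .node a b => inc (Psi (.node a b)) ++ [0]

lemma Psi_node (l r : PBT) : Psi (.node l r) = bse l ++ Psi r := by
  cases l <;> rfl

lemma length_inc (m : List ℕ) : (inc m).length = m.length := by
  cases m <;> rfl

lemma sum_inc (m : List ℕ) (h : m ≠ []) : (inc m).sum = m.sum + 1 := by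
  cases m with
  | nil => simp at h
  | cons a t => simp [inc]; ring

lemma length_Psi (t : PBT) : (Psi t).length = t.size := by
  induction t with
  | leaf => rfl
  | node l r ihl ihr =>
    rw [Psi_node, List.length_append]
    cases l with
    | leaf => simp [bse, PBT.size, ihr]; omega
    | node a b =>
      simp only [bse, List.length_append, length_inc, ihl, ihr, PBT.size,
        List.length_singleton]
      omega

lemma Psi_ne_nil {t : PBT} (h : t ≠ .leaf) : Psi t ≠ [] := by
  intro hn
  have := length_Psi t
  rw [hn] at this
  cases t with
  | leaf => exact h rfl
  | node l r => simp [PBT.size] at this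

lemma length_bse (l : PBT) : (bse l).length = l.size + 1 := by
  cases l with
  | leaf => rfl
  | node a b =>
    simp [bse, length_inc, length_Psi, PBT.size]

lemma sum_Psi (t : PBT) : (Psi t).sum = t.size := by
  induction t with
  | leaf => rfl
  | node l r ihl ihr =>
    rw [Psi_node, List.sum_append]
    cases l with
    | leaf => simp [bse, PBT.size, ihr]; omega
    | node a b =>
      rw [bse, List.sum_append, sum_inc _ (Psi_ne_nil (by simp)), ihl]
      simp [PBT.size, ihr]; ring

lemma sum_bse (l : PBT) : (bse l).sum = l.size + 1 := by
  cases l with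
  | leaf => rfl
  | node a b =>
    rw [bse, List.sum_append, sum_inc _ (Psi_ne_nil (by simp)), sum_Psi]
    simp

end Dev
section Dev2

lemma take_bse_strict_cond (l : PBT)
    (H : ∀ h ≤ l.size, h ≤ ((Psi l).take h).sum) :
    ∀ h, 1 ≤ h → h ≤ l.size → h + 1 ≤ ((bse l).take h).sum := by
  intro h h1 hle
  cases l with
  | leaf => simp [PBT.size] at hle; omega
  | node a b =>
    have hne : Psi (PBT.node a b) ≠ [] := Psi_ne_nil (by simp)
    have hlen : (inc (Psi (PBT.node a b))).length = (PBT.node a b).size := by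
      rw [length_inc, length_Psi]
    rw [bse, List.take_append_of_le_length (by omega)]
    obtain ⟨c, tl, hct⟩ := List.exists_cons_of_ne_nil hne
    obtain ⟨h', rfl⟩ : ∃ h', h = h' + 1 := ⟨h - 1, by omega⟩
    have hH := H (h' + 1) hle
    rw [hct] at hH ⊢
    simp only [inc, List.take_succ_cons, List.sum_cons] at hH ⊢
    omega

lemma take_Psi (t : PBT) : ∀ h ≤ t.size, h ≤ ((Psi t).take h).sum := by
  induction t with
  | leaf =>
    intro h hh
    have : h = 0 := Nat.le_zero.mp hh
    simp [this]
  | node l r ihl ihr =>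
    intro h hh
    rw [Psi_node]
    by_cases hc : h ≤ l.size + 1
    · rw [List.take_append_of_le_length (by rw [length_bse]; omega)]
      rcases Nat.eq_zero_or_pos h with h0 | hpos
      · simp [h0]
      · rcases Nat.lt_or_ge h (l.size + 1) with hlt | hge
        · have := take_bse_strict_cond l ihl h hpos (by omega)
          omega
        · have : h = l.size + 1 := by omega
          subst this
          rw [List.take_of_length_le (le_of_eq (length_bse l)), sum_bse]
    · rw [List.take_append, List.sum_append,
        List.take_of_length_le (by rw [length_bse]; omega), sum_bse, length_bse]
      have := ihr (h - (l.size + 1)) (by simp [PBT.size] at hh; omega)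
      omega

lemma take_bse_strict (l : PBT) :
    ∀ h, 1 ≤ h → h ≤ l.size → h + 1 ≤ ((bse l).take h).sum :=
  take_bse_strict_cond l (fun h hh => take_Psi l h hh)

lemma Psi_under (t s : PBT) : Psi (under t s) = Psi t ++ Psi s := by
  induction t with
  | leaf => rfl
  | node l r ihl ihr =>
    show Psi (.node l (under r s)) = _
    rw [Psi_node, ihr, Psi_node, List.append_assoc]

end Dev2
section Dev3

lemma bse_len_le {l l' : PBT} {x y : List ℕ} (h : bse l ++ x = bse l' ++ y) :
    l.size ≤ l'.size := by
  by_contra hlt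
  push_neg at hlt
  set L' := l'.size + 1 with hL'
  have hstrict : L' + 1 ≤ ((bse l).take L').sum :=
    take_bse_strict l L' (by omega) (by omega)
  have h1 : ((bse l ++ x).take L') = (bse l).take L' :=
    List.take_append_of_le_length (by rw [length_bse]; omega)
  have h2 : ((bse l' ++ y).take L') = bse l' := by
    rw [List.take_append_of_le_length (by rw [length_bse]),
      List.take_of_length_le (le_of_eq (length_bse l'))]
  have := congrArg (fun z => (z.take L').sum) h
  simp only [h1, h2] at this
  rw [this, sum_bse] at hstrict
  omega

lemma inc_inj {a b : List ℕ} (ha : a ≠ []) (hb : b ≠ []) (h : inc a = inc b) :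
    a = b := by
  obtain ⟨a0, at', rfl⟩ := List.exists_cons_of_ne_nil ha
  obtain ⟨b0, bt', rfl⟩ := List.exists_cons_of_ne_nil hb
  simp only [inc, List.cons.injEq] at h ⊢
  exact ⟨by omega, h.2⟩

lemma Psi_inj : ∀ t s : PBT, Psi t = Psi s → t = s := by
  intro t
  induction t with
  | leaf =>
    intro s h
    by_contra hs
    exact Psi_ne_nil (Ne.symm hs) h.symm
  | node l r ihl ihr =>
    intro s h
    cases s with
    | leaf => exact absurd h (Psi_ne_nil (by simp))
    | node l' r' =>
      rw [Psi_node, Psi_node] at h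
      have hsz : l.size = l'.size := le_antisymm (bse_len_le h) (bse_len_le h.symm)
      have hlen : (bse l).length = (bse l').length := by
        rw [length_bse, length_bse, hsz]
      obtain ⟨h1, h2⟩ := List.append_inj h hlen
      have hll : l = l' := by
        cases l with
        | leaf =>
          cases l' with
          | leaf => rfl
          | node a b => simp [PBT.size] at hsz
        | node a b =>
          cases l' with
          | leaf => simp [PBT.size] at hsz
          | node a' b' =>
            simp only [bse] at h1
            have h3 : inc (Psi (PBT.node a b)) = inc (Psi (PBT.node a' b')) :=
              List.append_cancel_right h1
            exact ihl _ (inc_inj (Psi_ne_nil (by simp)) (Psi_ne_nil (by simp)) h3)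
      rw [hll, ihr _ h2]

end Dev3
section Dev4

lemma inM_Psi {t : PBT} (h : t ≠ .leaf) : inM (Psi t) :=
  ⟨Psi_ne_nil h, by rw [sum_Psi, length_Psi],
    fun h' hlt => take_Psi t h' (by rw [length_Psi] at hlt; omega)⟩

lemma decomposable_of_split {m : List ℕ} (hm : inM m)
    (hd : ∃ h, 1 ≤ h ∧ h < m.length ∧ (m.take h).sum = h) :
    ∃ u v : List ℕ, inM u ∧ inM v ∧ m = u ++ v ∧ 0 < u.length ∧ 0 < v.length := by
  obtain ⟨h, h1, hlt, hsum⟩ := hd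
  obtain ⟨hne, hs, hp⟩ := hm
  refine ⟨m.take h, m.drop h, ⟨?_, ?_, ?_⟩, ⟨?_, ?_, ?_⟩, (List.take_append_drop h m).symm, ?_, ?_⟩
  · have hl : (m.take h).length = h := by rw [List.length_take]; omega
    intro hnil
    rw [hnil] at hl
    simp at hl
    omega
  · rw [hsum, List.length_take]; omega
  · intro j hj
    rw [List.length_take] at hj
    rw [List.take_take]
    have : min j h = j := by omega
    rw [this]
    exact hp j (by omega)
  · have hl : (m.drop h).length = m.length - h := List.length_drop
    intro hnil
    rw [hnil] at hl
    simp at hl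
    omega
  · have hsplit : (m.take h).sum + (m.drop h).sum = m.sum := by
      rw [← List.sum_append, List.take_append_drop]
    rw [List.length_drop]
    omega
  · intro j hj
    rw [List.length_drop] at hj
    have htj : m.take (h + j) = m.take h ++ (m.drop h).take j := List.take_add
    have hpj := hp (h + j) (by omega)
    rw [htj, List.sum_append, hsum] at hpj
    omega
  · rw [List.length_take]; omega
  · rw [List.length_drop]; omega

lemma split_of_decomposable {m : List ℕ} (hd : decomposable m) :
    ∃ h, 1 ≤ h ∧ h < m.length ∧ (m.take h).sum = h := by
  obtain ⟨u, v, hu, hv, rfl⟩ := hd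
  have hu1 : 0 < u.length := List.length_pos_iff.mpr hu.1
  have hv1 : 0 < v.length := List.length_pos_iff.mpr hv.1
  refine ⟨u.length, by omega, by rw [List.length_append]; omega, ?_⟩
  rw [List.take_left, hu.2.1]

lemma indecomp_core {m : List ℕ} (hm : inM m) (h2 : 2 ≤ m.length)
    (hnd : ¬ ∃ h, 1 ≤ h ∧ h < m.length ∧ (m.take h).sum = h) :
    ∃ (m₁ : ℕ) (rest : List ℕ), m = (m₁ :: rest) ++ [0] ∧ 2 ≤ m₁ ∧
      inM ((m₁ - 1) :: rest) := by
  obtain ⟨hne, hs, hp⟩ := hm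
  push_neg at hnd
  have hstrict : ∀ h, 1 ≤ h → h < m.length → h + 1 ≤ (m.take h).sum := by
    intro h hh1 hh2
    have := hp h hh2
    have := hnd h hh1 hh2
    omega
  set k := m.length with hk
  have hdl : m.dropLast = m.take (k - 1) := by
    rw [List.dropLast_eq_take]
  have hmsplit : m.dropLast ++ [m.getLast hne] = m := List.dropLast_append_getLast hne
  have hsum_dl : (m.take (k - 1)).sum + m.getLast hne = k := by
    have := congrArg List.sum hmsplit
    rw [List.sum_append, hdl] at this
    simp at this
    omega
  have hstr := hstrict (k - 1) (by omega) (by omega)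
  have hlast : m.getLast hne = 0 := by omega
  have hsum_dl' : (m.take (k - 1)).sum = k := by omega
  have hdlne : m.dropLast ≠ [] := by
    intro hnil
    have := congrArg List.length hnil
    rw [List.length_dropLast] at this
    simp at this
    omega
  obtain ⟨m₁, rest, hcons⟩ := List.exists_cons_of_ne_nil hdlne
  refine ⟨m₁, rest, ?_, ?_, ?_, ?_, ?_⟩
  · rw [← hmsplit, hcons, hlast]
  · -- 2 ≤ m₁
    have h1 := hstrict 1 (le_refl 1) (by omega)
    have ht1 : m.take 1 = [m₁] := by
      conv_lhs => rw [← hmsplit, hcons]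
      rfl
    rw [ht1] at h1
    simpa using h1
  · simp
  · -- sum = length
    have hlen : rest.length = k - 2 := by
      have := congrArg List.length hcons
      rw [List.length_dropLast] at this
      simp at this
      omega
    have hsum : m₁ + rest.sum = k := by
      have := congrArg List.sum hcons
      rw [hdl] at this
      simp at this
      omega
    have h1 := hstrict 1 (le_refl 1) (by omega)
    have ht1 : m.take 1 = [m₁] := by
      conv_lhs => rw [← hmsplit, hcons]
      rfl
    rw [ht1] at h1
    simp at h1
    simp [hlen]
    omega
  · -- prefix sums
    intro j hj
    simp only [List.length_cons] at hj
    rcases Nat.eq_zero_or_pos j with rfl | hjpos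
    · simp
    · have hlen : rest.length = k - 2 := by
        have := congrArg List.length hcons
        rw [List.length_dropLast] at this
        simp at this
        omega
      obtain ⟨j', rfl⟩ : ∃ j', j = j' + 1 := ⟨j - 1, by omega⟩
      have htj : m.take (j' + 1) = m₁ :: rest.take j' := by
        conv_lhs => rw [← hmsplit, hcons]
        rw [List.cons_append, List.take_succ_cons]
        congr 1
        rw [List.take_append_of_le_length (by omega)]
      have hsj := hstrict (j' + 1) (by omega) (by omega)
      rw [htj] at hsj
      simp only [List.take_succ_cons, List.sum_cons] at hsj ⊢
      have h1 := hstrict 1 (le_refl 1) (by omega)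
      have ht1 : m.take 1 = [m₁] := by
        conv_lhs => rw [← hmsplit, hcons]
        rfl
      rw [ht1] at h1
      simp at h1 hsj ⊢
      omega

end Dev4
section Dev5

lemma Psi_surj : ∀ k : ℕ, ∀ m : List ℕ, m.length = k → inM m → ∃ t : PBT, Psi t = m := by
  intro k
  induction k using Nat.strong_induction_on with
  | _ k ih =>
    intro m hlen hm
    by_cases hd : ∃ h, 1 ≤ h ∧ h < m.length ∧ (m.take h).sum = h
    · obtain ⟨u, v, hu, hv, rfl, hul, hvl⟩ := decomposable_of_split hm hd
      rw [List.length_append] at hlen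
      obtain ⟨tu, htu⟩ := ih u.length (by omega) u rfl hu
      obtain ⟨tv, htv⟩ := ih v.length (by omega) v rfl hv
      exact ⟨under tu tv, by rw [Psi_under, htu, htv]⟩
    · rcases Nat.lt_or_ge m.length 2 with hk1 | hk2
      · have h1 : m.length = 1 := by
          have := List.length_pos_iff.mpr hm.1
          omega
        obtain ⟨a, rfl⟩ := List.length_eq_one_iff.mp h1
        have : a = 1 := by
          have := hm.2.1
          simpa using this
        exact ⟨.node .leaf .leaf, by rw [this]; rfl⟩
      · obtain ⟨m₁, rest, hmeq, hm1, hm'⟩ := indecomp_core hm hk2 hd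
        have hlen' : ((m₁ - 1) :: rest).length = k - 1 := by
          have := congrArg List.length hmeq
          simp at this ⊢
          omega
        obtain ⟨t', ht'⟩ := ih (k - 1) (by omega) _ hlen' hm'
        have ht'ne : t' ≠ .leaf := by
          intro hl
          rw [hl] at ht'
          exact hm'.1 ht'.symm
        cases t' with
        | leaf => exact absurd rfl ht'ne
        | node a b =>
          refine ⟨.node (.node a b) .leaf, ?_⟩
          rw [hmeq, Psi_node]
          show (bse (PBT.node a b)) ++ [] = _
          rw [List.append_nil, bse, ht']
          show ((m₁ - 1 + 1) :: rest) ++ [0] = _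
          congr 2
          omega

open Classical in
noncomputable def Phi (m : List ℕ) : PBT :=
  if h : ∃ t : PBT, Psi t = m then h.choose else .leaf

lemma Phi_Psi (t : PBT) : Phi (Psi t) = t := by
  rw [Phi, dif_pos ⟨t, rfl⟩]
  exact Psi_inj _ _ (⟨t, rfl⟩ : ∃ s : PBT, Psi s = Psi t).choose_spec

lemma Psi_Phi {m : List ℕ} (hm : inM m) : Psi (Phi m) = m := by
  obtain ⟨t, ht⟩ := Psi_surj m.length m rfl hm
  rw [← ht, Phi_Psi, ht]

end Dev5
lemma bse_ne_leaf {t : PBT} (h : t ≠ .leaf) : bse t = inc (Psi t) ++ [0] := by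
  cases t with
  | leaf => exact absurd rfl h
  | node a b => rfl

lemma Phi_ne_leaf {m : List ℕ} (hm : inM m) : Phi m ≠ .leaf := by
  intro h
  have := Psi_Phi hm
  rw [h] at this
  exact hm.1 this.symm

/-- There is a bijection `Φ` between `M_k` and the set `Y_k` of planar binary trees with
`k` internal vertices, satisfying the recursive clauses: `Φ((1))` is the one-vertex tree `Y`;
`Φ(m' ++ m'') = Φ(m') \ Φ(m'')` for `m' ∈ M_l`, `m'' ∈ M_{k-l}`; and for indecomposable
`m = (m_1, …, m_{k-1}, 0)` (where necessarily `m_1 > 1`),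
`Φ(m) = Φ((m_1 - 1, m_2, …, m_{k-1})) / Y`. -/
theorem exists_tree_bijection :
    ∃ Φ : List ℕ → PBT,
      Φ [1] = PBT.node .leaf .leaf ∧
      (∀ u v : List ℕ, inM u → inM v → Φ (u ++ v) = under (Φ u) (Φ v)) ∧
      (∀ (m₁ : ℕ) (rest : List ℕ), inM ((m₁ :: rest) ++ [0]) →
        ¬ decomposable ((m₁ :: rest) ++ [0]) →
        Φ ((m₁ :: rest) ++ [0]) = treeOver (Φ ((m₁ - 1) :: rest)) (PBT.node .leaf .leaf)) ∧
      (∀ k : ℕ, 1 ≤ k →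
        Set.BijOn Φ {m : List ℕ | inM m ∧ m.length = k} {t : PBT | t.size = k}) := by
  refine ⟨Phi, ?_, ?_, ?_, ?_⟩
  · have h1 : Psi (PBT.node .leaf .leaf) = [1] := rfl
    rw [← h1, Phi_Psi]
  · intro u v hu hv
    have h : Psi (under (Phi u) (Phi v)) = u ++ v := by
      rw [Psi_under, Psi_Phi hu, Psi_Phi hv]
    rw [← h, Phi_Psi]
  · intro m₁ rest hM hnd
    have hnsplit : ¬ ∃ h, 1 ≤ h ∧ h < ((m₁ :: rest) ++ [0]).length ∧
        (((m₁ :: rest) ++ [0]).take h).sum = h := by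
      intro hsp
      obtain ⟨u, v, hu, hv, heq, _, _⟩ := decomposable_of_split hM hsp
      exact hnd ⟨u, v, hu, hv, heq⟩
    have hk2 : 2 ≤ ((m₁ :: rest) ++ [0]).length := by simp
    obtain ⟨m₁', rest', hmeq, hm1', hm''⟩ := indecomp_core hM hk2 hnsplit
    have hcons : m₁ :: rest = m₁' :: rest' := by
      have := List.append_inj' hmeq rfl
      exact this.1
    obtain ⟨rfl, rfl⟩ : m₁ = m₁' ∧ rest = rest' := by
      injection hcons with h1 h2
      exact ⟨h1, h2⟩
    have hPm' : Psi (Phi ((m₁ - 1) :: rest)) = (m₁ - 1) :: rest := Psi_Phi hm''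
    have hne : Phi ((m₁ - 1) :: rest) ≠ .leaf := Phi_ne_leaf hm''
    have hkey : Psi (PBT.node (Phi ((m₁ - 1) :: rest)) .leaf) = (m₁ :: rest) ++ [0] := by
      rw [Psi_node, bse_ne_leaf hne, hPm']
      show ((m₁ - 1 + 1) :: rest ++ [0]) ++ [] = _
      rw [List.append_nil]
      congr 2
      omega
    have hover : treeOver (Phi ((m₁ - 1) :: rest)) (PBT.node .leaf .leaf)
        = PBT.node (Phi ((m₁ - 1) :: rest)) .leaf := rfl
    rw [hover, ← hkey, Phi_Psi]
  · intro k hk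
    refine ⟨?_, ?_, ?_⟩
    · intro m hm
      obtain ⟨hm1, hm2⟩ := hm
      show (Phi m).size = k
      rw [← length_Psi, Psi_Phi hm1, hm2]
    · intro a ha b hb hab
      calc a = Psi (Phi a) := (Psi_Phi ha.1).symm
        _ = Psi (Phi b) := by rw [hab]
        _ = b := Psi_Phi hb.1
    · intro t ht
      have hne : t ≠ .leaf := by
        intro h
        rw [h] at ht
        simp only [Set.mem_setOf_eq, PBT.size] at ht
        omega
      exact ⟨Psi t, ⟨inM_Psi hne, by rw [length_Psi]; exact ht⟩, Phi_Psi t⟩
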